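/- (Positional determinacy of parity games, Gurevich–Harrington.) For every parity-game arena (V, V₀, E, χ) with E v nonempty for all v and Set.range χ finite, there exist positional strategies f₀ and f₁ such that for every vertex v : V, either every play from v that is consistent with f₀ for player 0 is won by player 0, or every play from v that is consistent with f₁ for player 1 is won by player 1. (In particular, the two positional winning regions partition V.) -/

import Mathlib

open Set

namespace ParityProof

variable {V : Type*}

noncomputable def payoff (χ : V → ℕ) (p : ℕ → V) : ℕ := sInf {c | {n | χ (p n) = c}.Infinite}

def PlayIn (E : V → Set V) (S : Set V) (p : ℕ → V) : Prop :=
  (∀ n, p n ∈ S) ∧ ∀ n, p (n + 1) ∈ E (p n)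

def Con (P : Set V) (f : V → V) (p : ℕ → V) : Prop := ∀ n, p n ∈ P → p (n + 1) = f (p n)

def Str (E : V → Set V) (S : Set V) (f : V → V) : Prop := ∀ v ∈ S, f v ∈ E v ∩ S

def W (E : V → Set V) (χ : V → ℕ) (S P : Set V) (ε : ℕ → Prop) (f : V → V) : Set V :=
  {v | v ∈ S ∧ ∀ p, PlayIn E S p → p 0 = v → Con P f p → ε (payoff χ p)}

def WR (E : V → Set V) (χ : V → ℕ) (S P : Set V) (ε : ℕ → Prop) : Set V :=
  {v | ∃ f, Str E S f ∧ v ∈ W E χ S P ε f}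

lemma WR_subset_S {E : V → Set V} {χ : V → ℕ} {S P : Set V} {ε : ℕ → Prop} :
    WR E χ S P ε ⊆ S := fun _ ⟨_, _, h⟩ => h.1

lemma infinite_iff_unbdd {s : Set ℕ} : s.Infinite ↔ ∀ N, ∃ n, N ≤ n ∧ n ∈ s := by
  constructor
  · intro hs N
    obtain ⟨n, hns, hn⟩ := (hs.diff (Set.finite_Iio N)).nonempty
    exact ⟨n, le_of_not_gt hn, hns⟩
  · intro h
    intro hfin
    obtain ⟨N, hN⟩ := hfin.bddAbove
    obtain ⟨n, hn, hns⟩ := h (N + 1)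
    exact absurd (hN hns) (by omega)

lemma payoff_shift (χ : V → ℕ) (p : ℕ → V) (k : ℕ) :
    payoff χ (fun n => p (n + k)) = payoff χ p := by
  unfold payoff
  congr 1
  ext c
  simp only [Set.mem_setOf_eq]
  constructor
  · intro h
    rw [infinite_iff_unbdd] at h ⊢
    intro N
    obtain ⟨n, hn, hc⟩ := h N
    exact ⟨n + k, by omega, hc⟩
  · intro h
    rw [infinite_iff_unbdd] at h ⊢
    intro N
    obtain ⟨n, hn, hc⟩ := h (N + k)
    refine ⟨n - k, by omega, ?_⟩
    simpa [Nat.sub_add_cancel (by omega : k ≤ n)] using hc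

lemma payoff_exists (χ : V → ℕ) (hχ : (Set.range χ).Finite) (p : ℕ → V) :
    {c | {n | χ (p n) = c}.Infinite}.Nonempty := by
  by_contra h
  rw [Set.not_nonempty_iff_eq_empty] at h
  have hall : ∀ c, {n | χ (p n) = c}.Finite := by
    intro c
    by_contra hc
    exact absurd (Set.eq_empty_iff_forall_notMem.1 h c) (by simpa using hc)
  have : (Set.univ : Set ℕ).Finite := by
    have hcov : (Set.univ : Set ℕ) ⊆ ⋃ c ∈ Set.range χ, {n | χ (p n) = c} := by
      intro n _
      exact Set.mem_biUnion (Set.mem_range_self (p n)) rfl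
    exact ((hχ.biUnion (fun c _ => hall c)).subset hcov)
  exact Set.infinite_univ this

lemma payoff_eq_min (χ : V → ℕ) {p : ℕ → V} {m : ℕ}
    (hm : {n | χ (p n) = m}.Infinite) (hlb : ∀ n, m ≤ χ (p n)) :
    payoff χ p = m := by
  refine le_antisymm (Nat.sInf_le hm) ?_
  apply le_csInf ⟨m, hm⟩
  rintro c hc
  obtain ⟨n, hn⟩ := hc.nonempty
  exact hn ▸ hlb n

lemma PlayIn.tail {E : V → Set V} {S : Set V} {p : ℕ → V} (hp : PlayIn E S p) (k : ℕ) :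
    PlayIn E S (fun n => p (n + k)) := by
  refine ⟨fun n => hp.1 _, fun n => ?_⟩
  have := hp.2 (n + k)
  simpa [Nat.add_right_comm n 1 k] using this

lemma Con.tail {P : Set V} {f : V → V} {p : ℕ → V} (hc : Con P f p) (k : ℕ) :
    Con P f (fun n => p (n + k)) := by
  intro n hn
  have := hc (n + k) hn
  simpa [Nat.add_right_comm n 1 k] using this

lemma win_of_tail {E : V → Set V} {χ : V → ℕ} {S P : Set V} {ε : ℕ → Prop} {f : V → V}
    {p : ℕ → V} (hp : PlayIn E S p) (hc : Con P f p) (k : ℕ)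
    (hk : p k ∈ W E χ S P ε f) : ε (payoff χ p) := by
  have := hk.2 (fun n => p (n + k)) (hp.tail k) (by simp) (hc.tail k)
  rwa [payoff_shift] at this

lemma W_step {E : V → Set V} {χ : V → ℕ} {S P : Set V} {ε : ℕ → Prop} {f : V → V} {v w : V}
    (hv : v ∈ W E χ S P ε f) (hw : w ∈ E v ∩ S) (hmv : v ∈ P → w = f v) :
    w ∈ W E χ S P ε f := by
  refine ⟨hw.2, fun p hp h0 hc => ?_⟩
  set r : ℕ → V := fun n => Nat.rec v (fun m _ => p m) n with hr
  have hr0 : r 0 = v := rfl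
  have hrs : ∀ n, r (n + 1) = p n := fun n => rfl
  have hplay : PlayIn E S r := by
    constructor
    · intro n
      cases n with
      | zero => exact hv.1
      | succ m => exact hp.1 m
    · intro n
      cases n with
      | zero => show p 0 ∈ E v; rw [h0]; exact hw.1
      | succ m => exact hp.2 m
  have hcon : Con P f r := by
    intro n hn
    cases n with
    | zero =>
      show p 0 = f v
      exact h0.trans (hmv hn)
    | succ m => exact hc m hn
  have hwin := hv.2 r hplay hr0 hcon
  have : payoff χ (fun n => r (n + 1)) = payoff χ r := payoff_shift χ r 1
  have hre : (fun n => r (n + 1)) = p := funext fun n => hrs n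
  rw [hre] at this
  rwa [← this] at hwin


lemma exists_uniform (E : V → Set V) (hE : ∀ v, (E v).Nonempty) (χ : V → ℕ)
    (S P : Set V) (ε : ℕ → Prop) (hS : ∀ v ∈ S, (E v ∩ S).Nonempty) :
    ∃ g, Str E S g ∧ ∀ v ∈ WR E χ S P ε, v ∈ W E χ S P ε g := by
  classical
  let r : (V → V) → (V → V) → Prop := WellOrderingRel
  have wf : WellFounded r := (WellOrderingRel.isWellOrder).wf
  let C : V → Set (V → V) := fun u => {f | Str E S f ∧ u ∈ W E χ S P ε f}
  let g : V → V := fun u =>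
    if h : (C u).Nonempty then wf.min (C u) h u
    else if h2 : u ∈ S then (hS u h2).choose else (hE u).choose
  have hgpos : ∀ u (h : (C u).Nonempty), g u = wf.min (C u) h u := by
    intro u h
    simp only [g, dif_pos h]
  refine ⟨g, ?_, ?_⟩
  · intro v hv
    by_cases h : (C v).Nonempty
    · rw [hgpos v h]
      exact (wf.min_mem (C v) h).1 v hv
    · simp only [g, dif_neg h, dif_pos hv]
      exact (hS v hv).choose_spec
  · rintro v ⟨f0, hf0s, hf0w⟩
    refine ⟨hf0w.1, fun p hp h0 hc => ?_⟩
    have key : ∀ n, (C (p n)).Nonempty := by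
      intro n
      induction n with
      | zero => exact ⟨f0, hf0s, h0 ▸ hf0w⟩
      | succ m ih =>
        set fm := wf.min (C (p m)) ih with hfm
        have hfmC : fm ∈ C (p m) := wf.min_mem (C (p m)) ih
        have hnext : p (m + 1) ∈ W E χ S P ε fm := by
          refine W_step hfmC.2 ⟨hp.2 m, hp.1 (m + 1)⟩ (fun hP => ?_)
          rw [hc m hP, hgpos (p m) ih]
        exact ⟨fm, hfmC.1, hnext⟩
    let a : ℕ → (V → V) := fun n => wf.min (C (p n)) (key n)
    have ham : ∀ n, a n ∈ C (p n) := fun n => wf.min_mem (C (p n)) (key n)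
    have hstep : ∀ n, a n ∈ C (p (n + 1)) := by
      intro n
      refine ⟨(ham n).1, W_step (ham n).2 ⟨hp.2 n, hp.1 (n + 1)⟩ (fun hP => ?_)⟩
      rw [hc n hP, hgpos (p n) (key n)]
    have hchain : ∀ n, ¬ r (a n) (a (n + 1)) := fun n =>
      wf.not_lt_min (C (p (n + 1))) (hstep n)
    obtain ⟨N, haN⟩ : ∃ N, a N = wf.min (Set.range a) ⟨a 0, Set.mem_range_self 0⟩ := by
      obtain ⟨N, hN⟩ := wf.min_mem (Set.range a) ⟨a 0, Set.mem_range_self 0⟩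
      exact ⟨N, hN⟩
    have hstab : ∀ n, N ≤ n → a n = a N := by
      intro n hn
      induction n, hn using Nat.le_induction with
      | base => rfl
      | succ n hn ih =>
        have h1 : ¬ r (a n) (a (n + 1)) := hchain n
        have h2 : ¬ r (a (n + 1)) (a N) := by
          rw [haN]
          exact wf.not_lt_min (Set.range a) (Set.mem_range_self (n + 1))
        rcases trichotomous_of r (a (n + 1)) (a N) with h | h | h
        · exact absurd h h2
        · exact h
        · rw [← ih] at h
          exact absurd h h1
    have hNW : p N ∈ W E χ S P ε (a N) := (ham N).2
    have hcon : Con P (a N) (fun n => p (n + N)) := by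
      intro k hk
      have h1 := hc (k + N) hk
      have h2 : g (p (k + N)) = a (k + N) (p (k + N)) := hgpos (p (k + N)) (key (k + N))
      have h3 : a (k + N) = a N := hstab (k + N) (by omega)
      show p (k + 1 + N) = a N (p (k + N))
      rw [Nat.add_right_comm k 1 N, h1, h2, h3]
    have := hNW.2 (fun n => p (n + N)) (hp.tail N) (by simp) hcon
    rwa [payoff_shift] at this

lemma WR_closed_P {E : V → Set V} {χ : V → ℕ} {S P : Set V} {ε : ℕ → Prop} {v w : V}
    (hv : v ∈ S) (hvP : v ∈ P) (hw : w ∈ E v ∩ S) (hwWR : w ∈ WR E χ S P ε) :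
    v ∈ WR E χ S P ε := by
  classical
  by_cases hvWR : v ∈ WR E χ S P ε
  · exact hvWR
  obtain ⟨f, hfs, hfw⟩ := hwWR
  set g' : V → V := Function.update f v w with hg'
  have hg'v : g' v = w := Function.update_self v w f
  have hg'ne : ∀ u, u ≠ v → g' u = f u := fun u hu => Function.update_of_ne hu w f
  have hstr : Str E S g' := by
    intro u hu
    by_cases h : u = v
    · rw [h, hg'v]; exact hw
    · rw [hg'ne u h]; exact hfs u hu
  refine ⟨g', hstr, hv, fun p hp h0 hcp => ?_⟩
  have hWne : ∀ u, u ∈ W E χ S P ε f → u ≠ v := by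
    intro u hu he
    exact hvWR ⟨f, hfs, he ▸ hu⟩
  have h1 : p 1 = w := by
    have := hcp 0 (h0 ▸ hvP)
    rw [this, h0, hg'v]
  have hkey : ∀ n, p (n + 1) ∈ W E χ S P ε f := by
    intro n
    induction n with
    | zero => rw [h1]; exact hfw
    | succ m ih =>
      refine W_step ih ⟨hp.2 (m + 1), hp.1 (m + 2)⟩ (fun hPm => ?_)
      rw [hcp (m + 1) hPm, hg'ne _ (hWne _ ih)]
  have hcon : Con P f (fun n => p (n + 1)) := by
    intro k hk
    have := hcp (k + 1) hk
    show p (k + 1 + 1) = f (p (k + 1))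
    rw [this, hg'ne _ (hWne _ (hkey k))]
  have := (hkey 0).2 (fun n => p (n + 1)) (hp.tail 1) (by simp) hcon
  rwa [payoff_shift] at this

lemma WR_closed_opp (E : V → Set V) (hE : ∀ v, (E v).Nonempty) {χ : V → ℕ} {S P : Set V}
    {ε : ℕ → Prop} {v : V} (hS : ∀ u ∈ S, (E u ∩ S).Nonempty)
    (hv : v ∈ S) (hvP : v ∉ P) (hsub : E v ∩ S ⊆ WR E χ S P ε) :
    v ∈ WR E χ S P ε := by
  obtain ⟨g, hgs, hgw⟩ := exists_uniform E hE χ S P ε hS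
  refine ⟨g, hgs, hv, fun p hp h0 hcp => ?_⟩
  have h1 : p 1 ∈ W E χ S P ε g := by
    refine hgw _ (hsub ⟨?_, hp.1 1⟩)
    rw [← h0]; exact hp.2 0
  exact win_of_tail hp hcp 1 h1


section Attractor

universe u
variable {V : Type u} (E : V → Set V) (T M Q : Set V)

noncomputable def stage : Ordinal.{u} → Set V :=
  Ordinal.lt_wf.fix fun o rec =>
    {v | v ∈ T ∧ (v ∈ M ∨ (v ∈ Q ∧ ∃ w, w ∈ E v ∩ T ∧ ∃ o', ∃ h : o' < o, w ∈ rec o' h) ∨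
       (v ∉ Q ∧ ∀ w, w ∈ E v ∩ T → ∃ o', ∃ h : o' < o, w ∈ rec o' h))}

lemma stage_def (o : Ordinal.{u}) : stage E T M Q o =
    {v | v ∈ T ∧ (v ∈ M ∨ (v ∈ Q ∧ ∃ w, w ∈ E v ∩ T ∧ ∃ o', ∃ _ : o' < o, w ∈ stage E T M Q o') ∨
       (v ∉ Q ∧ ∀ w, w ∈ E v ∩ T → ∃ o', ∃ _ : o' < o, w ∈ stage E T M Q o'))} := by
  show Ordinal.lt_wf.fix _ o = _
  rw [WellFounded.fix_eq]
  rfl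

def Attr : Set V := {v | ∃ o : Ordinal.{u}, v ∈ stage E T M Q o}

lemma attr_subset_T : Attr E T M Q ⊆ T := by
  rintro v ⟨o, ho⟩
  rw [stage_def] at ho
  exact ho.1

lemma M_subset_attr (hM : M ⊆ T) : M ⊆ Attr E T M Q := by
  intro v hv
  exact ⟨0, by rw [stage_def]; exact ⟨hM hv, Or.inl hv⟩⟩

open Classical in
noncomputable def rank (v : V) : Ordinal.{u} :=
  if h : v ∈ Attr E T M Q then Ordinal.lt_wf.min {o | v ∈ stage E T M Q o} h else 0

lemma mem_stage_rank {v : V} (hv : v ∈ Attr E T M Q) :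
    v ∈ stage E T M Q (rank E T M Q v) := by
  rw [rank, dif_pos hv]
  exact Ordinal.lt_wf.min_mem _ hv

lemma rank_le {v : V} {o : Ordinal.{u}} (h : v ∈ stage E T M Q o) :
    rank E T M Q v ≤ o := by
  rw [rank, dif_pos ⟨o, h⟩]
  exact le_of_not_gt (Ordinal.lt_wf.not_lt_min _ h)

lemma attr_succ_Q {v : V} (hv : v ∈ T) (hQ : v ∈ Q) {w : V} (hw : w ∈ E v ∩ T)
    (hwA : w ∈ Attr E T M Q) : v ∈ Attr E T M Q := by
  refine ⟨Order.succ (rank E T M Q w), ?_⟩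
  rw [stage_def]
  exact ⟨hv, Or.inr (Or.inl ⟨hQ, w, hw, rank E T M Q w, Order.lt_succ _,
    mem_stage_rank E T M Q hwA⟩)⟩

lemma attr_succ_nQ {v : V} (hv : v ∈ T) (hQ : v ∉ Q)
    (hall : ∀ w, w ∈ E v ∩ T → w ∈ Attr E T M Q) : v ∈ Attr E T M Q := by
  refine ⟨Order.succ (⨆ w : ↥(E v ∩ T), rank E T M Q w.1), ?_⟩
  rw [stage_def]
  refine ⟨hv, Or.inr (Or.inr ⟨hQ, fun w hw => ⟨rank E T M Q w, ?_, mem_stage_rank E T M Q (hall w hw)⟩⟩)⟩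
  refine Order.lt_succ_iff.2 ?_
  exact le_ciSup (Ordinal.bddAbove_range _) (⟨w, hw⟩ : ↥(E v ∩ T))

lemma attr_choice {v : V} (hv : v ∈ Attr E T M Q) (hM : v ∉ M) (hQ : v ∈ Q) :
    ∃ w, w ∈ E v ∩ T ∧ w ∈ Attr E T M Q ∧ rank E T M Q w < rank E T M Q v := by
  have h := mem_stage_rank E T M Q hv
  rw [stage_def] at h
  rcases h.2 with hM' | ⟨_, w, hw, o', ho', hws⟩ | ⟨hnQ, _⟩
  · exact absurd hM' hM
  · exact ⟨w, hw, ⟨o', hws⟩, lt_of_le_of_lt (rank_le E T M Q hws) ho'⟩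
  · exact absurd hQ hnQ

open Classical in
noncomputable def fA : V → V := fun v =>
  if h : v ∈ Attr E T M Q ∧ v ∉ M ∧ v ∈ Q then (attr_choice E T M Q h.1 h.2.1 h.2.2).choose
  else v

lemma fA_spec {v : V} (hv : v ∈ Attr E T M Q) (hM : v ∉ M) (hQ : v ∈ Q) :
    fA E T M Q v ∈ E v ∩ T ∧ fA E T M Q v ∈ Attr E T M Q ∧
      rank E T M Q (fA E T M Q v) < rank E T M Q v := by
  rw [fA, dif_pos ⟨hv, hM, hQ⟩]
  exact (attr_choice E T M Q hv hM hQ).choose_spec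

lemma attr_reach {f : V → V} (hf : ∀ v, v ∈ Attr E T M Q → v ∉ M → v ∈ Q → f v = fA E T M Q v)
    (o : Ordinal.{u}) :
    ∀ v, v ∈ stage E T M Q o → ∀ p : ℕ → V, (∀ n, p n ∈ T) → (∀ n, p (n + 1) ∈ E (p n)) →
      Con Q f p → p 0 = v → ∃ k, p k ∈ M := by
  induction o using Ordinal.induction with
  | h o IH =>
  intro v hv p hpT hpE hpc h0
  by_cases hvM : v ∈ M
  · exact ⟨0, h0 ▸ hvM⟩
  have hvo := hv
  rw [stage_def] at hv
  rcases hv.2 with hM' | ⟨hQ, w₀, hw₀, o₀, ho₀, hws₀⟩ | ⟨hnQ, hall⟩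
  · exact absurd hM' hvM
  · have hvA : v ∈ Attr E T M Q := ⟨o, hvo⟩
    obtain ⟨hwet, hwA, hrlt⟩ := fA_spec E T M Q hvA hvM hQ
    have hro : rank E T M Q (fA E T M Q v) < o :=
      lt_of_lt_of_le hrlt (rank_le E T M Q hvo)
    have hp1 : p 1 = fA E T M Q v := by
      rw [hpc 0 (h0 ▸ hQ), h0, hf v hvA hvM hQ]
    obtain ⟨k, hk⟩ := IH _ hro _ (mem_stage_rank E T M Q hwA) (fun n => p (n + 1))
      (fun n => hpT _) (fun n => by simpa [Nat.add_right_comm n 1 1] using hpE (n + 1))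
      (hpc.tail 1) (by simpa using hp1)
    exact ⟨k + 1, hk⟩
  · have hp1 : p 1 ∈ E v ∩ T := ⟨h0 ▸ hpE 0, hpT 1⟩
    obtain ⟨o', ho', hst⟩ := hall _ hp1
    obtain ⟨k, hk⟩ := IH o' ho' _ hst (fun n => p (n + 1)) (fun n => hpT _)
      (fun n => by simpa [Nat.add_right_comm n 1 1] using hpE (n + 1)) (hpc.tail 1) rfl
    exact ⟨k + 1, hk⟩

end Attractor


section Zielonka

universe u
variable {V : Type u}

lemma zstep (E : V → Set V) (χ : V → ℕ) (hE : ∀ v, (E v).Nonempty)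
    (hχ : (Set.range χ).Finite)
    (Q : Set V) (ε δ : ℕ → Prop)
    (S : Set V) (hS : ∀ v ∈ S, (E v ∩ S).Nonempty)
    (hne : (χ '' S).Nonempty) (hεm : ε (sInf (χ '' S)))
    (IH : ∀ Y : Set V, Y ⊆ S → (∀ v ∈ Y, (E v ∩ Y).Nonempty) →
      (χ '' Y).ncard < (χ '' S).ncard →
      ∀ v ∈ Y, v ∈ WR E χ Y Q ε ∪ WR E χ Y Qᶜ δ) :
    ∀ v ∈ S, v ∈ WR E χ S Q ε ∪ WR E χ S Qᶜ δ := by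
  classical
  set m := sInf (χ '' S) with hm
  obtain ⟨g, hgStr, hgW⟩ := exists_uniform E hE χ S Qᶜ δ hS
  set Wopp := WR E χ S Qᶜ δ with hWoppd
  set X := S \ Wopp with hXd
  have hXS : X ⊆ S := diff_subset
  have trap1 : ∀ u ∈ X, u ∉ Q → E u ∩ S ⊆ X := by
    intro u hu hQ w hw
    exact ⟨hw.2, fun hwW => hu.2 (WR_closed_P hu.1 hQ hw hwW)⟩
  have trap2 : ∀ u ∈ X, (E u ∩ X).Nonempty := by
    intro u hu
    by_cases hQ : u ∈ Q
    · by_contra hemp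
      rw [Set.not_nonempty_iff_eq_empty] at hemp
      have hsub : E u ∩ S ⊆ Wopp := by
        intro w hw
        by_contra hwW
        have : w ∈ E u ∩ X := ⟨hw.1, hw.2, hwW⟩
        rw [hemp] at this
        exact this
      exact hu.2 (WR_closed_opp E hE hS hu.1 (fun h => h hQ) hsub)
    · obtain ⟨w, hw⟩ := hS u hu.1
      exact ⟨w, hw.1, trap1 u hu hQ hw⟩
  set Mset := {v | v ∈ X ∧ χ v = m} with hMsetd
  have hMX : Mset ⊆ X := fun v hv => hv.1
  have hMA : Mset ⊆ Attr E X Mset Q := M_subset_attr E X Mset Q hMX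
  have hAX : Attr E X Mset Q ⊆ X := attr_subset_T E X Mset Q
  set Y := X \ Attr E X Mset Q with hYd
  have hYX : Y ⊆ X := diff_subset
  have hYS : Y ⊆ S := hYX.trans hXS
  have hYQ : ∀ u ∈ Y, u ∈ Q → E u ∩ X ⊆ Y := by
    intro u hu hQ w hw
    exact ⟨hw.2, fun hwA => hu.2 (attr_succ_Q E X Mset Q hu.1 hQ hw hwA)⟩
  have hYsub : ∀ u ∈ Y, (E u ∩ Y).Nonempty := by
    intro u hu
    by_cases hQ : u ∈ Q
    · obtain ⟨w, hw⟩ := trap2 u hu.1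
      exact ⟨w, hw.1, hYQ u hu hQ hw⟩
    · by_contra hemp
      rw [Set.not_nonempty_iff_eq_empty] at hemp
      refine hu.2 (attr_succ_nQ E X Mset Q hu.1 hQ ?_)
      intro w hw
      by_contra hwA
      have : w ∈ E u ∩ Y := ⟨hw.1, hw.2, hwA⟩
      rw [hemp] at this
      exact this
  have hfinS : (χ '' S).Finite := hχ.subset (image_subset_range χ S)
  have hmS : m ∈ χ '' S := Nat.sInf_mem hne
  have hYcol : χ '' Y ⊆ (χ '' S) \ {m} := by
    rintro c ⟨v, hv, rfl⟩
    refine ⟨mem_image_of_mem χ (hYS hv), fun hc => ?_⟩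
    exact hv.2 (hMA ⟨hYX hv, hc⟩)
  have hYlt : (χ '' Y).ncard < (χ '' S).ncard := by
    have h1 : (χ '' Y).ncard ≤ ((χ '' S) \ {m}).ncard :=
      Set.ncard_le_ncard hYcol hfinS.diff
    have h2 : ((χ '' S) \ {m}).ncard < (χ '' S).ncard := by
      refine Set.ncard_lt_ncard ?_ hfinS
      exact (Set.ssubset_iff_of_subset diff_subset).2 ⟨m, hmS, fun h => h.2 rfl⟩
    omega
  have hdetY := IH Y hYS hYsub hYlt
  obtain ⟨gY, hgYStr, hgYW⟩ := exists_uniform E hE χ Y Q ε hYsub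
  obtain ⟨gY', hgY'Str, hgY'W⟩ := exists_uniform E hE χ Y Qᶜ δ hYsub
  set Yopp := WR E χ Y Qᶜ δ with hYoppd
  have hYoppY : Yopp ⊆ Y := WR_subset_S
  have hYoppE : ∀ v, v ∉ Yopp := by
    intro v hv
    have hvY : v ∈ Y := hYoppY hv
    have hvX : v ∈ X := hYX hvY
    set hh : V → V := fun u => if u ∈ Yopp ∧ u ∉ Wopp then gY' u else g u with hhd
    have hhStr : Str E S hh := by
      intro u hu
      by_cases hc : u ∈ Yopp ∧ u ∉ Wopp
      · have : hh u = gY' u := if_pos hc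
        rw [this]
        have h2 := hgY'Str u (hYoppY hc.1)
        exact ⟨h2.1, hYS h2.2⟩
      · have : hh u = g u := if_neg hc
        rw [this]
        exact hgStr u hu
    refine hvX.2 ⟨hh, hhStr, hYS hvY, fun p hp h0 hcp => ?_⟩
    by_cases hcase : ∃ k, p k ∈ Wopp
    · set k₀ := Nat.find hcase with hk₀d
      have key : ∀ j, p (j + k₀) ∈ W E χ S Qᶜ δ g := by
        intro j
        induction j with
        | zero => simpa using hgW _ (Nat.find_spec hcase)
        | succ j ih =>
          have heq : j + 1 + k₀ = (j + k₀) + 1 := by omega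
          rw [heq]
          refine W_step ih ⟨hp.2 (j + k₀), hp.1 (j + k₀ + 1)⟩ (fun hQc => ?_)
          have h1 := hcp (j + k₀) hQc
          have h2 : hh (p (j + k₀)) = g (p (j + k₀)) :=
            if_neg (fun hc => hc.2 ⟨g, hgStr, ih⟩)
          rw [h1, h2]
      have hconq : Con Qᶜ g (fun n => p (n + k₀)) := by
        intro n hn
        have h1 := hcp (n + k₀) hn
        have h2 : hh (p (n + k₀)) = g (p (n + k₀)) :=
          if_neg (fun hc => hc.2 ⟨g, hgStr, key n⟩)
        show p (n + 1 + k₀) = g (p (n + k₀))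
        rw [Nat.add_right_comm n 1 k₀, h1, h2]
      have := (key 0).2 (fun n => p (n + k₀)) (hp.tail k₀) rfl hconq
      rwa [payoff_shift] at this
    · have hnW : ∀ k, p k ∉ Wopp := fun k hk => hcase ⟨k, hk⟩
      have keyY : ∀ k, p k ∈ Yopp := by
        intro k
        induction k with
        | zero => exact h0 ▸ hv
        | succ k ih =>
          have huY : p k ∈ Y := hYoppY ih
          have hedge : p (k + 1) ∈ E (p k) := hp.2 k
          by_cases hQc : p k ∈ Qᶜ
          · have he : p (k + 1) = gY' (p k) := by
              rw [hcp k hQc]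
              exact if_pos ⟨ih, hnW k⟩
            have hWmem : p (k + 1) ∈ W E χ Y Qᶜ δ gY' :=
              W_step (hgY'W _ ih) ⟨hedge, he ▸ (hgY'Str _ huY).2⟩ (fun _ => he)
            exact ⟨gY', hgY'Str, hWmem⟩
          · have hQ : p k ∈ Q := not_not.1 hQc
            have hwX : p (k + 1) ∈ X := ⟨hp.1 (k + 1), hnW (k + 1)⟩
            have hwY : p (k + 1) ∈ Y := hYQ _ huY hQ ⟨hedge, hwX⟩
            have hWmem : p (k + 1) ∈ W E χ Y Qᶜ δ gY' :=
              W_step (hgY'W _ ih) ⟨hedge, hwY⟩ (fun hc => absurd hc hQc)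
            exact ⟨gY', hgY'Str, hWmem⟩
      have hpY : PlayIn E Y p := ⟨fun k => hYoppY (keyY k), hp.2⟩
      have hcY : Con Qᶜ gY' p := by
        intro k hk
        rw [hcp k hk]
        exact if_pos ⟨keyY k, hnW k⟩
      exact (hgY'W v hv).2 p hpY h0 hcY
  have hYwin : ∀ u ∈ Y, u ∈ W E χ Y Q ε gY := fun u hu =>
    hgYW u ((hdetY u hu).resolve_right (hYoppE u))
  set fπ : V → V := fun u =>
    if u ∈ Y then gY u
    else if u ∈ Attr E X Mset Q ∧ u ∉ Mset ∧ u ∈ Q then fA E X Mset Q u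
    else if h2 : u ∈ X then (trap2 u h2).choose
    else if h3 : u ∈ S then (hS u h3).choose
    else (hE u).choose with hfπd
  have hfπY : ∀ u ∈ Y, fπ u = gY u := fun u hu => if_pos hu
  have hfπA : ∀ u, u ∈ Attr E X Mset Q → u ∉ Mset → u ∈ Q → fπ u = fA E X Mset Q u := by
    intro u h1 h2 h3
    have hnY : u ∉ Y := fun hY => hY.2 h1
    show fπ u = _
    rw [show fπ u = _ from if_neg hnY, if_pos ⟨h1, h2, h3⟩]
  have hfπX : ∀ u ∈ X, fπ u ∈ E u ∩ X := by
    intro u hu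
    by_cases h1 : u ∈ Y
    · rw [hfπY u h1]
      have h2 := hgYStr u h1
      exact ⟨h2.1, hYX h2.2⟩
    · by_cases h2 : u ∈ Attr E X Mset Q ∧ u ∉ Mset ∧ u ∈ Q
      · rw [show fπ u = _ from if_neg h1, if_pos h2]
        exact (fA_spec E X Mset Q h2.1 h2.2.1 h2.2.2).1
      · rw [show fπ u = _ from if_neg h1, if_neg h2, dif_pos hu]
        exact (trap2 u hu).choose_spec
  have hfπStr : Str E S fπ := by
    intro u hu
    by_cases hX' : u ∈ X
    · have := hfπX u hX'
      exact ⟨this.1, hXS this.2⟩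
    · have h1 : u ∉ Y := fun h => hX' (hYX h)
      have h2 : ¬(u ∈ Attr E X Mset Q ∧ u ∉ Mset ∧ u ∈ Q) := fun h => hX' (hAX h.1)
      rw [show fπ u = _ from if_neg h1, if_neg h2, dif_neg hX', dif_pos hu]
      exact (hS u hu).choose_spec
  have hstay : ∀ p : ℕ → V, PlayIn E S p → Con Q fπ p → p 0 ∈ X → ∀ n, p n ∈ X := by
    intro p hp hcp h0 n
    induction n with
    | zero => exact h0
    | succ k ih =>
      by_cases hQ : p k ∈ Q
      · rw [hcp k hQ]
        exact (hfπX _ ih).2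
      · exact trap1 _ ih hQ ⟨hp.2 k, hp.1 (k + 1)⟩
  have hXwin : ∀ v ∈ X, v ∈ W E χ S Q ε fπ := by
    intro v hvX
    refine ⟨hXS hvX, fun p hp h0 hcp => ?_⟩
    have hpX : ∀ n, p n ∈ X := hstay p hp hcp (h0 ▸ hvX)
    by_cases hinf : {n | χ (p n) = m}.Infinite
    · rw [payoff_eq_min χ hinf (fun n => Nat.sInf_le (mem_image_of_mem χ (hXS (hpX n))))]
      exact hεm
    · have hMfin : {n | p n ∈ Mset}.Finite :=
        (Set.not_infinite.1 hinf).subset (fun n hn => hn.2)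
      obtain ⟨N, hN⟩ := hMfin.bddAbove
      have hnM : ∀ n, N + 1 ≤ n → p n ∉ Mset := fun n hn hmem => by
        have := hN hmem; omega
      have hnA : ∀ n, N + 1 ≤ n → p n ∉ Attr E X Mset Q := by
        intro n hn hA'
        obtain ⟨k, hk⟩ := attr_reach E X Mset Q hfπA (rank E X Mset Q (p n)) (p n)
          (mem_stage_rank E X Mset Q hA') (fun j => p (j + n)) (fun j => hpX _)
          ((hp.tail n).2) (hcp.tail n) (by simp)
        exact hnM (k + n) (by omega) hk
      have hpYn : ∀ n, N + 1 ≤ n → p n ∈ Y := fun n hn => ⟨hpX n, hnA n hn⟩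
      have hqY : PlayIn E Y (fun j => p (j + (N + 1))) :=
        ⟨fun j => hpYn _ (by omega), (hp.tail (N + 1)).2⟩
      have hqc : Con Q gY (fun j => p (j + (N + 1))) := by
        intro j hj
        have h1 := (hcp.tail (N + 1)) j hj
        rw [h1]
        exact hfπY _ (hpYn _ (by omega))
      have := (hYwin _ (hpYn (N + 1) le_rfl)).2 (fun j => p (j + (N + 1))) hqY
        (by simp) hqc
      rwa [payoff_shift] at this
  intro v hvS
  by_cases hv : v ∈ Wopp
  · exact Or.inr hv
  · exact Or.inl ⟨fπ, hfπStr, hXwin v ⟨hvS, hv⟩⟩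

lemma main (V₀ : Set V) (E : V → Set V) (χ : V → ℕ) (hE : ∀ v, (E v).Nonempty)
    (hχ : (Set.range χ).Finite) :
    ∀ n : ℕ, ∀ S : Set V, (∀ v ∈ S, (E v ∩ S).Nonempty) → (χ '' S).ncard ≤ n →
      ∀ v ∈ S, v ∈ WR E χ S V₀ (fun k => Even k) ∪ WR E χ S V₀ᶜ (fun k => Odd k) := by
  intro n
  induction n with
  | zero =>
    intro S hS hcard v hv
    exfalso
    have hfin : (χ '' S).Finite := hχ.subset (image_subset_range χ S)
    have : (χ '' S) = ∅ := (Set.ncard_eq_zero hfin).1 (by omega)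
    have : χ v ∈ (∅ : Set ℕ) := this ▸ mem_image_of_mem χ hv
    exact this
  | succ n IHn =>
    intro S hS hcard
    by_cases hle : (χ '' S).ncard ≤ n
    · exact IHn S hS hle
    · have hne : (χ '' S).Nonempty := by
        apply Set.nonempty_of_ncard_ne_zero
        omega
      rcases Nat.even_or_odd (sInf (χ '' S)) with hm | hm
      · exact zstep E χ hE hχ V₀ (fun k => Even k) (fun k => Odd k) S hS hne hm
          (fun Y hYS hYsub hYlt => IHn Y hYsub (by omega))
      · intro v hv
        have hco : V₀ᶜᶜ = V₀ := compl_compl V₀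
        have hIH : ∀ Y : Set V, Y ⊆ S → (∀ u ∈ Y, (E u ∩ Y).Nonempty) →
            (χ '' Y).ncard < (χ '' S).ncard →
            ∀ u ∈ Y, u ∈ WR E χ Y V₀ᶜ (fun k => Odd k) ∪ WR E χ Y V₀ᶜᶜ (fun k => Even k) := by
          intro Y hYS hYsub hYlt u hu
          rw [hco]
          exact (IHn Y hYsub (by omega) u hu).symm
        have := zstep E χ hE hχ V₀ᶜ (fun k => Odd k) (fun k => Even k) S hS hne hm hIH v hv
        rw [hco] at this
        exact this.symm

end Zielonka

end ParityProof

theorem parity_games_positional_determinacy {V : Type*}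
    (V₀ : Set V) (E : V → Set V) (hE : ∀ v, (E v).Nonempty)
    (χ : V → ℕ) (hχ : (Set.range χ).Finite) :
    ∃ f₀ f₁ : V → V, (∀ v, f₀ v ∈ E v) ∧ (∀ v, f₁ v ∈ E v) ∧
      ∀ v : V,
        (∀ p : ℕ → V, p 0 = v → (∀ n, p (n + 1) ∈ E (p n)) →
          (∀ n, p n ∈ V₀ → p (n + 1) = f₀ (p n)) →
          Even (sInf {c : ℕ | {n : ℕ | χ (p n) = c}.Infinite})) ∨
        (∀ p : ℕ → V, p 0 = v → (∀ n, p (n + 1) ∈ E (p n)) →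
          (∀ n, p n ∉ V₀ → p (n + 1) = f₁ (p n)) →
          Odd (sInf {c : ℕ | {n : ℕ | χ (p n) = c}.Infinite})) := by
  classical
  have hsubU : ∀ v ∈ (Set.univ : Set V), (E v ∩ Set.univ).Nonempty := by
    intro v _
    simpa using hE v
  have hdet := ParityProof.main V₀ E χ hE hχ (χ '' Set.univ).ncard Set.univ hsubU le_rfl
  obtain ⟨g₀, hg₀S, hg₀W⟩ :=
    ParityProof.exists_uniform E hE χ Set.univ V₀ (fun k => Even k) hsubU
  obtain ⟨g₁, hg₁S, hg₁W⟩ :=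
    ParityProof.exists_uniform E hE χ Set.univ V₀ᶜ (fun k => Odd k) hsubU
  refine ⟨g₀, g₁, fun v => (hg₀S v trivial).1, fun v => (hg₁S v trivial).1, fun v => ?_⟩
  rcases hdet v trivial with h | h
  · left
    intro p h0 hedge hcon
    exact (hg₀W v h).2 p ⟨fun n => trivial, hedge⟩ h0 hcon
  · right
    intro p h0 hedge hcon
    exact (hg₁W v h).2 p ⟨fun n => trivial, hedge⟩ h0 (fun n hn => hcon n hn)
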